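/- The powers of ℱ form an increasing chain: ℱ↑n ≤ ℱ↑(n+1) for every natural number n. Consequently the set {ℱ↑n : n ∈ ℕ} is directed (with respect to ≤) and its least upper bound ℱ↑ω exists in P, so the powers of ℱ are correctly defined. -/

import Mathlib

open scoped Classical

/-- The order on `P`, the set of total functions from situations (`Set S`) to
situations: `f₁ ≤ f₂` iff for every situation `Σ`, `f₁ Σ ≠ ∅ → f₁ Σ = f₂ Σ`. -/
def ple {S : Type*} (f₁ f₂ : Set S → Set S) : Prop :=
  ∀ Sig : Set S, f₁ Sig ≠ ∅ → f₁ Sig = f₂ Sig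

/-- `f` is a least upper bound of `D ⊆ P` with respect to `ple`. -/
def IsLubP {S : Type*} (D : Set (Set S → Set S)) (f : Set S → Set S) : Prop :=
  (∀ d ∈ D, ple d f) ∧ ∀ g : Set S → Set S, (∀ d ∈ D, ple d g) → ple f g

/-- `D ⊆ P` is directed: every finite subset of `D` has a least upper bound
that exists and belongs to `D`. -/
def DirectedP {S : Type*} (D : Set (Set S → Set S)) : Prop :=
  ∀ F : Set (Set S → Set S), F ⊆ D → F.Finite → ∃ f ∈ D, IsLubP F f

/-- The operator `ℱ_{g,T}` associated with a while loop whose test condition is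
satisfied exactly by the states in `T` and whose body has effect `g`. -/
noncomputable def Fop {S : Type*} (T : Set S) (g : Set S → Set S)
    (f : Set S → Set S) : Set S → Set S := fun Sig =>
  if Sig ∩ T = ∅ then Sig
  else if Sig ≠ ∅ ∧ Sig ⊆ T then f (g Sig)
  else ∅

/-- The powers of `ℱ`: `ℱ↑0 = f_∅` and `ℱ↑(n+1) = ℱ(ℱ↑n)`. -/
noncomputable def Fpow {S : Type*} (T : Set S) (g : Set S → Set S) :
    ℕ → (Set S → Set S)
  | 0 => fun _ => ∅
  | n + 1 => Fop T g (Fpow T g n)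

lemma ple_trans {S : Type*} {f₁ f₂ f₃ : Set S → Set S} (h12 : ple f₁ f₂)
    (h23 : ple f₂ f₃) : ple f₁ f₃ := fun Sig hne => by
  rw [h12 Sig hne]; exact h23 Sig (h12 Sig hne ▸ hne)

lemma Fpow_step {S : Type*} (T : Set S) (g : Set S → Set S) :
    ∀ n : ℕ, ple (Fpow T g n) (Fpow T g (n + 1)) := by
  intro n
  induction n with
  | zero => intro Sig hne; exact absurd rfl hne
  | succ n ih =>
    intro Sig hne
    show Fop T g (Fpow T g n) Sig = Fop T g (Fpow T g (n + 1)) Sig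
    unfold Fop
    split
    · rfl
    · split
      · rename_i hT hS
        have hne' : Fpow T g n (g Sig) ≠ ∅ := by
          intro h
          apply hne
          show Fop T g (Fpow T g n) Sig = ∅
          simp only [Fop, if_neg hT, if_pos hS]
          exact h
        exact ih (g Sig) hne'
      · rfl

lemma Fpow_le {S : Type*} (T : Set S) (g : Set S → Set S) {m n : ℕ} (h : m ≤ n) :
    ple (Fpow T g m) (Fpow T g n) := by
  induction n with
  | zero => cases Nat.le_zero.mp h; intro Sig hne; rfl
  | succ n ih =>
    rcases Nat.lt_or_ge m (n + 1) with h' | h'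
    · exact ple_trans (ih (Nat.lt_succ_iff.mp h')) (Fpow_step T g n)
    · have : m = n + 1 := le_antisymm h h'
      subst this; intro Sig hne; rfl

lemma Fpow_stable {S : Type*} (T : Set S) (g : Set S → Set S) {m n : ℕ}
    {Sig : Set S} (hm : Fpow T g m Sig ≠ ∅) (hn : Fpow T g n Sig ≠ ∅) :
    Fpow T g m Sig = Fpow T g n Sig := by
  rcases Nat.le_or_le m n with h | h
  · exact Fpow_le T g h Sig hm
  · exact (Fpow_le T g h Sig hn).symm

/-- The powers of `ℱ` form an increasing chain: `ℱ↑n ≤ ℱ↑(n+1)` for every `n`.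
Consequently the set `{ℱ↑n : n ∈ ℕ}` is directed and its least upper bound
`ℱ↑ω` exists in `P`. -/
theorem Fpow_chain_directed_lub {S : Type*} (T : Set S) (g : Set S → Set S) :
    (∀ n : ℕ, ple (Fpow T g n) (Fpow T g (n + 1))) ∧
    DirectedP {f : Set S → Set S | ∃ n : ℕ, f = Fpow T g n} ∧
    ∃ fω : Set S → Set S,
      IsLubP {f : Set S → Set S | ∃ n : ℕ, f = Fpow T g n} fω := by
  set D : Set (Set S → Set S) := {f | ∃ n : ℕ, f = Fpow T g n} with hD
  refine ⟨Fpow_step T g, ?_, ?_⟩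
  · -- directed
    intro F hFD hFfin
    have key : F ⊆ D → ∃ N : ℕ, (∀ f ∈ F, ple f (Fpow T g N)) ∧
        ((F = ∅ ∧ N = 0) ∨ Fpow T g N ∈ F) := by
      clear hFD
      refine Set.Finite.induction_on (motive := fun F _ => F ⊆ D → ∃ N : ℕ,
          (∀ f ∈ F, ple f (Fpow T g N)) ∧ ((F = ∅ ∧ N = 0) ∨ Fpow T g N ∈ F))
          F hFfin (fun _ => ⟨0, fun f hf => absurd hf (Set.notMem_empty f),
          Or.inl ⟨rfl, rfl⟩⟩) ?_
      intro a F ha hFfin ih hFD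
      obtain ⟨N, hN, hNmem⟩ := ih (fun f hf => hFD (Set.mem_insert_of_mem a hf))
      obtain ⟨k, hk⟩ := hFD (Set.mem_insert a F)
      rcases hNmem with ⟨hFe, _⟩ | hNmem
      · subst hFe
        refine ⟨k, ?_, Or.inr (hk ▸ Set.mem_insert a ∅)⟩
        intro f hf
        rcases Set.mem_insert_iff.mp hf with h | h
        · subst h; rw [hk]; intro Sig hne; rfl
        · exact absurd h (Set.notMem_empty f)
      · refine ⟨max k N, ?_, Or.inr ?_⟩
        · intro f hf
          rcases Set.mem_insert_iff.mp hf with h | h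
          · subst h; rw [hk]; exact Fpow_le T g (le_max_left k N)
          · exact ple_trans (hN f h) (Fpow_le T g (le_max_right k N))
        · rcases Nat.le_or_le k N with h | h
          · rw [max_eq_right h]; exact Set.mem_insert_of_mem a hNmem
          · rw [max_eq_left h]; exact hk ▸ Set.mem_insert a F
    obtain ⟨N, hN, hNmem⟩ := key hFD
    refine ⟨Fpow T g N, ⟨N, rfl⟩, hN, ?_⟩
    intro h hup
    rcases hNmem with ⟨hFe, hN0⟩ | hNmem
    · subst hN0; intro Sig hne; exact absurd rfl hne
    · exact hup _ hNmem
  · -- lub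
    refine ⟨fun Sig => if h : ∃ n, Fpow T g n Sig ≠ ∅ then Fpow T g h.choose Sig
      else ∅, ?_, ?_⟩
    · rintro d ⟨n, rfl⟩ Sig hne
      have hex : ∃ m, Fpow T g m Sig ≠ ∅ := ⟨n, hne⟩
      simp only [dif_pos hex]
      exact Fpow_stable T g hne hex.choose_spec
    · intro h hup Sig hne
      by_cases hex : ∃ n, Fpow T g n Sig ≠ ∅
      · simp only [dif_pos hex] at hne ⊢
        exact hup _ ⟨hex.choose, rfl⟩ Sig hne
      · simp only [dif_neg hex] at hne
        exact absurd rfl hne
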